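/- arXiv:1305.2173 — 4 statements merged into one kernel-verified Lean document; each statement's English description precedes it below -/
import Mathlib

section
/- In a one-dimensional convex cellular network, if a set of messages admits an alternating demand-graph cycle (D_{i1} ↛ S_{i2} → D_{i3} ↛ ... → D_{i1}) among its sources and destinations, then there exists an alternating subpath D_{j1} ↛ S_{j2} → D_{j3} ↛ S_{j4} → D_{j5} within the cycle satisfying D_{j1} < D_{j3}, D_{j5} < D_{j3}, S_{j4} < D_{j3}, and D_{j1} < S_{j2} in position order. -/
/-- A one-dimensional convex cellular network: sources and destinations are
placed at (distinct) positions on the real line; `desired s d` means source `s`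
has a desired message for destination `d`; `heard s d` means `d` can hear `s`
(nonzero channel).  The fields are the destination- and source-convexity
properties of the paper, plus non-degeneracy (desired implies heard). -/
structure IsConvexCellular {Src Dst : Type*} (posS : Src → ℝ) (posD : Dst → ℝ)
    (desired heard : Src → Dst → Prop) : Prop where
  posS_inj : Function.Injective posS
  posD_inj : Function.Injective posD
  pos_ne : ∀ s d, posS s ≠ posD d
  desired_heard : ∀ s d, desired s d → heard s d
  /-- Destination convexity (a): a desired source on the left forces all closer
  sources on the left to be desired. -/
  destConvL : ∀ s1 s2 d, posS s1 < posS s2 → posS s2 < posD d → desired s1 d → desired s2 d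
  /-- Destination convexity (b): right side. -/
  destConvR : ∀ s1 s2 d, posS s2 < posS s1 → posD d < posS s2 → desired s1 d → desired s2 d
  /-- Destination convexity (c): an unheard source on the left forces all farther
  sources on the left to be unheard. -/
  destHearL : ∀ s1 s2 d, posS s1 < posS s2 → posS s2 < posD d → ¬ heard s2 d → ¬ heard s1 d
  /-- Destination convexity (d): right side. -/
  destHearR : ∀ s1 s2 d, posS s2 < posS s1 → posD d < posS s2 → ¬ heard s2 d → ¬ heard s1 d
  /-- Source convexity (a). -/
  srcConvL : ∀ d1 d2 s, posD d1 < posD d2 → posD d2 < posS s → desired s d1 → desired s d2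
  /-- Source convexity (b). -/
  srcConvR : ∀ d1 d2 s, posD d2 < posD d1 → posS s < posD d2 → desired s d1 → desired s d2
  /-- Source convexity (c). -/
  srcHearL : ∀ d1 d2 s, posD d1 < posD d2 → posD d2 < posS s → ¬ heard s d2 → ¬ heard s d1
  /-- Source convexity (d). -/
  srcHearR : ∀ d1 d2 s, posD d2 < posD d1 → posS s < posD d2 → ¬ heard s d2 → ¬ heard s d1

/-- If a set of messages (the relation `desired`) admits an alternating
demand-graph cycle `D₁ ↛ S₁ → D₂ ↛ S₂ → ⋯ → D₁` among its sources and
destinations, then within the cycle there is an alternating subpath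
`Dⱼ₁ ↛ Sⱼ₂ → Dⱼ₃ ↛ Sⱼ₄ → Dⱼ₅` with `Dⱼ₁ < Dⱼ₃`, `Dⱼ₅ < Dⱼ₃`, `Sⱼ₄ < Dⱼ₃`
and `Dⱼ₁ < Sⱼ₂` in position order. -/
theorem stmt5 {Src Dst : Type*} (posS : Src → ℝ) (posD : Dst → ℝ)
    (desired heard : Src → Dst → Prop)
    (h : IsConvexCellular posS posD desired heard)
    (n : ℕ) (s : Fin (n + 1) → Src) (d : Fin (n + 1) → Dst)
    (hs : Function.Injective s) (hd : Function.Injective d)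
    (hcyc : ∀ k, ¬ heard (s k) (d k) ∧ desired (s k) (d (k + 1))) :
    ∃ (dj1 dj3 dj5 : Dst) (sj2 sj4 : Src),
      (∃ k, d k = dj1) ∧ (∃ k, d k = dj3) ∧ (∃ k, d k = dj5) ∧
      (∃ k, s k = sj2) ∧ (∃ k, s k = sj4) ∧
      ¬ heard sj2 dj1 ∧ desired sj2 dj3 ∧ ¬ heard sj4 dj3 ∧ desired sj4 dj5 ∧
      posD dj1 < posD dj3 ∧ posD dj5 < posD dj3 ∧
      posS sj4 < posD dj3 ∧ posD dj1 < posS sj2 := by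
  rcases Nat.eq_zero_or_pos n with hn | hn
  · subst hn
    obtain ⟨h1, h2⟩ := hcyc 0
    have e : (0 + 1 : Fin 1) = 0 := by decide
    rw [e] at h2
    exact absurd (h.desired_heard _ _ h2) h1
  · obtain ⟨m, hm⟩ := Finite.exists_max (fun k : Fin (n + 1) => posD (d k))
    have hne1 : (1 : Fin (n + 1)) ≠ 0 := by
      intro he
      have hv : ((1 : Fin (n + 1)) : ℕ) = 0 := by rw [he]; rfl
      rw [Fin.val_one', Nat.mod_eq_of_lt (by omega)] at hv
      omega
    set a := m - 1 with ha_def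
    have ha : a + 1 = m := sub_add_cancel m 1
    have ham : a ≠ m := fun he => hne1 (sub_eq_self.mp he)
    have hm1 : m + 1 ≠ m := fun he => hne1 (add_eq_left.mp he)
    have strict : ∀ k, k ≠ m → posD (d k) < posD (d m) := fun k hk =>
      lt_of_le_of_ne (hm k) (fun he => hk (hd (h.posD_inj he)))
    obtain ⟨ea1, ea2⟩ := hcyc a
    obtain ⟨em1, em2⟩ := hcyc m
    rw [ha] at ea2
    have heardam : heard (s a) (d m) := h.desired_heard _ _ ea2
    have heardm1 : heard (s m) (d (m + 1)) := h.desired_heard _ _ em2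
    have hA : posD (d a) < posS (s a) := by
      by_contra hc
      have hlt : posS (s a) < posD (d a) :=
        lt_of_le_of_ne (not_lt.mp hc) (h.pos_ne _ _)
      exact h.srcHearR (d m) (d a) (s a) (strict a ham) hlt ea1 heardam
    have hB : posS (s m) < posD (d m) := by
      by_contra hc
      have hlt : posD (d m) < posS (s m) :=
        lt_of_le_of_ne (not_lt.mp hc) (fun he => h.pos_ne _ _ he.symm)
      exact h.srcHearL (d (m + 1)) (d m) (s m) (strict _ hm1) hlt em1 heardm1
    exact ⟨d a, d m, d (m + 1), s a, s m, ⟨a, rfl⟩, ⟨m, rfl⟩, ⟨m + 1, rfl⟩,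
      ⟨a, rfl⟩, ⟨m, rfl⟩, ea1, ea2, em1, em2, strict a ham, strict _ hm1, hB, hA⟩
end

section
/- In a one-dimensional convex cellular network where the left-to-right greedy orthogonal scheme, after choosing the message S1 → D1, would next choose S_i → D_j, the set of all messages that either originate from sources S1,...,S_{i-1} or are intended for destinations D1,...,D_{j-1} induces an acyclic demand graph (no alternating cycle of desired edges and non-hearing edges exists among the relevant sources and destinations). -/
/-- The demand graph induced by the message set `W` has an alternating cycle:
a closed cyclic sequence of distinct sources and distinct destinations
alternating non-hearing edges with desired edges that are messages of `W`. -/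
def HasAltCycleIn {Src Dst : Type*} (W heard : Src → Dst → Prop) : Prop :=
  ∃ (n : ℕ) (s : Fin (n + 1) → Src) (d : Fin (n + 1) → Dst),
    Function.Injective s ∧ Function.Injective d ∧
    ∀ k, ¬ heard (s k) (d k) ∧ W (s k) (d (k + 1))

/-- Let `S1` be the leftmost source and `D1` the leftmost destination (so
`S1 → D1` is the first greedy message), and suppose that after `S1 → D1` the
left-to-right greedy orthogonal scheme would next choose `Si → Dj`, i.e.
`Si → Dj` is the (source-then-destination) lexicographically first message
orthogonal to `S1 → D1`.  Then the set of all messages that either originate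
from a source strictly to the left of `Si` or are intended for a destination
strictly to the left of `Dj` induces an acyclic demand graph. -/
theorem stmt7 {Src Dst : Type*} (posS : Src → ℝ) (posD : Dst → ℝ)
    (desired heard : Src → Dst → Prop)
    (h : IsConvexCellular posS posD desired heard)
    (S1 : Src) (D1 : Dst)
    (hS1 : ∀ s, posS S1 ≤ posS s) (hD1 : ∀ d, posD D1 ≤ posD d)
    (h11 : desired S1 D1)
    (Si : Src) (Dj : Dst)
    (hij : desired Si Dj) (horthS : ¬ heard Si D1) (horthD : ¬ heard S1 Dj)
    (hmin : ∀ S D, desired S D → ¬ heard S D1 → ¬ heard S1 D →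
      posS Si < posS S ∨ (posS Si = posS S ∧ posD Dj ≤ posD D)) :
    ¬ HasAltCycleIn
      (fun S D => desired S D ∧ (posS S < posS Si ∨ posD D < posD Dj)) heard := by
  rintro ⟨n, s, d, hsInj, hdInj, hcyc⟩
  -- Step 1: extract an orthogonal message (S, D) from the cycle.
  obtain ⟨S, D, hdes, hSD1, hS1D, hW⟩ :
      ∃ S D, desired S D ∧ ¬ heard S D1 ∧ ¬ heard S1 D ∧
        (posS S < posS Si ∨ posD D < posD Dj) := by
    rcases n with _ | m
    · -- n = 0 : the single edge is both unheard and desired, contradiction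
      exfalso
      have h0 := hcyc 0
      have he : (0 + 1 : Fin 1) = 0 := by decide
      rw [he] at h0
      exact h0.1 (h.desired_heard _ _ h0.2.1)
    · -- n = m + 1 : at least two sources and two destinations
      have hne : ∀ k : Fin (m + 2), k + 1 ≠ k := by
        intro k hk
        have h1 : k + 1 = k + 0 := by rw [add_zero]; exact hk
        have : (1 : Fin (m + 2)) = 0 := add_left_cancel h1
        exact one_ne_zero this
      by_cases hstep : ∃ k : Fin (m + 2),
          ¬ (posS (s k) < posD (d k)) ∧ posS (s (k + 1)) < posD (d (k + 1))
      · obtain ⟨k, hk1, hk2⟩ := hstep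
        refine ⟨s k, d (k + 1), (hcyc k).2.1, ?_, ?_, (hcyc k).2.2⟩
        · -- ¬ heard (s k) D1
          have hlt : posD (d k) < posS (s k) :=
            lt_of_le_of_ne (not_lt.mp hk1) (h.pos_ne (s k) (d k)).symm
          rcases eq_or_lt_of_le (hD1 (d k)) with heq | hD1lt
          · have : D1 = d k := h.posD_inj heq
            rw [this]; exact (hcyc k).1
          · exact h.srcHearL D1 (d k) (s k) hD1lt hlt (hcyc k).1
        · -- ¬ heard S1 (d (k+1))
          rcases eq_or_lt_of_le (hS1 (s (k + 1))) with heq | hS1lt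
          · have : S1 = s (k + 1) := h.posS_inj heq
            rw [this]; exact (hcyc (k + 1)).1
          · exact h.destHearL S1 (s (k + 1)) (d (k + 1)) hS1lt hk2 (hcyc (k + 1)).1
      · exfalso
        push_neg at hstep
        by_cases hall : ∀ k : Fin (m + 2), posS (s k) < posD (d k)
        · -- all sources left of their paired destinations
          obtain ⟨k, hkmin⟩ := Finite.exists_min (fun k : Fin (m + 2) => posD (d k))
          have hne' : d (k + 1) ≠ d k := fun hc => hne k (hdInj hc)
          have hlt : posD (d k) < posD (d (k + 1)) :=
            lt_of_le_of_ne (hkmin (k + 1)) (fun hc => hne' (h.posD_inj hc.symm))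
          exact h.srcHearR (d (k + 1)) (d k) (s k) hlt (hall k) (hcyc k).1
            (h.desired_heard _ _ (hcyc k).2.1)
        · -- all destinations left of their paired sources
          push_neg at hall
          obtain ⟨k0, hk0⟩ := hall
          open Fin.NatCast in
          have hallB : ∀ k : Fin (m + 2), ¬ posS (s k) < posD (d k) := by
            have key : ∀ t : ℕ, posD (d (k0 + (t : Fin (m + 2)))) ≤
                posS (s (k0 + (t : Fin (m + 2)))) := by
              intro t
              induction t with
              | zero => simpa using hk0
              | succ t ih =>
                have hcast : ((t + 1 : ℕ) : Fin (m + 2)) = (t : Fin (m + 2)) + 1 := by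
                  push_cast; ring
                rw [hcast, ← add_assoc]
                exact hstep _ ih
            intro k
            have := key (k - k0).val
            rw [Fin.cast_val_eq_self, add_comm, sub_add_cancel] at this
            exact not_lt.mpr this
          obtain ⟨k, hkmin⟩ := Finite.exists_min (fun k : Fin (m + 2) => posS (s k))
          have hknz : k - 1 ≠ k := by
            intro hc
            have h2 : k - 1 + 1 = k := sub_add_cancel k 1
            rw [hc] at h2
            exact hne k h2
          have hne' : s (k - 1) ≠ s k := fun hc => hknz (hsInj hc)
          have hlt : posS (s k) < posS (s (k - 1)) :=
            lt_of_le_of_ne (hkmin (k - 1)) (fun hc => hne' (h.posS_inj hc.symm))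
          have hdk : posD (d k) < posS (s k) :=
            lt_of_le_of_ne (not_lt.mp (hallB k)) (h.pos_ne (s k) (d k)).symm
          have hdes' : desired (s (k - 1)) (d k) := by
            have := (hcyc (k - 1)).2.1
            rwa [sub_add_cancel] at this
          exact h.destHearR (s (k - 1)) (s k) (d k) hlt hdk (hcyc k).1
            (h.desired_heard _ _ hdes')
  -- Step 2: derive the contradiction from greedy minimality.
  rcases hmin S D hdes hSD1 hS1D with hlt | ⟨heqS, hle⟩
  · have hDlt : posD D < posD Dj := hW.resolve_left (asymm hlt)
    have hdesSiD : desired Si D := by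
      rcases lt_or_gt_of_ne (h.pos_ne Si D) with hc | hc
      · exact h.srcConvR Dj D Si hDlt hc hij
      · exact h.destConvR S Si D hlt hc hdes
    rcases hmin Si D hdesSiD horthS hS1D with h' | ⟨_, h'⟩
    · exact lt_irrefl _ h'
    · exact absurd hDlt (not_lt.mpr h')
  · have : Si = S := h.posS_inj heqS
    subst this
    rcases hW with hw | hw
    · exact lt_irrefl _ hw
    · exact absurd hw (not_lt.mpr hle)
end

section
/- In a one-dimensional convex cellular network, suppose the left-to-right greedy orthogonal scheme selects the messages S_{i1} → D_{j1}, ..., S_{in} → D_{jn}. Then the message set partitions into n blocks, the k-th block consisting of messages originating from sources S_{ik},...,S_{i(k+1)-1} or intended for destinations D_{jk},...,D_{j(k+1)-1}, such that each block induces an acyclic demand graph. -/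
/-- Membership of message `S → D` in the `k`-th block determined by the greedy
selections `σ, δ`: it consists of the messages originating from a source in
`[σ k, σ (k+1))` or intended for a destination in `[δ k, δ (k+1))` (not already
in an earlier block); the last block has no upper constraint. -/
def InBlock {Src Dst : Type*} (posS : Src → ℝ) (posD : Dst → ℝ)
    (desired : Src → Dst → Prop) (n : ℕ) (σ : Fin n → Src) (δ : Fin n → Dst)
    (k : Fin n) (S : Src) (D : Dst) : Prop :=
  desired S D ∧ posS (σ k) ≤ posS S ∧ posD (δ k) ≤ posD D ∧
  ((k : ℕ) + 1 = n ∨ ∃ hk : (k : ℕ) + 1 < n,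
    posS S < posS (σ ⟨(k : ℕ) + 1, hk⟩) ∨ posD D < posD (δ ⟨(k : ℕ) + 1, hk⟩))

open Fin.NatCast Fin.CommRing in
lemma cyclic_no_strict_desc {N : ℕ} [NeZero N] (f : Fin N → ℝ)
    (h : ∀ i, f (i + 1) < f i) : False := by
  have hg : ∀ t : ℕ, f ((t+1 : ℕ) : Fin N) < f ((t : ℕ) : Fin N) := by
    intro t
    have e : ((t+1 : ℕ) : Fin N) = ((t : ℕ) : Fin N) + 1 := by push_cast; ring
    rw [e]; exact h _
  have hanti : StrictAnti fun t : ℕ => f ((t : ℕ) : Fin N) :=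
    strictAnti_nat_of_succ_lt hg
  have hN : 0 < N := Nat.pos_of_ne_zero (NeZero.ne N)
  have := hanti hN
  simp only [Fin.natCast_self, Nat.cast_zero] at this
  exact lt_irrefl _ this

open Fin.NatCast Fin.CommRing in
lemma cyclic_all {N : ℕ} [NeZero N] (Q : Fin N → Prop)
    (step : ∀ j, Q j → Q (j + 1)) (j0 : Fin N) (h0 : Q j0) : ∀ i, Q i := by
  have ht : ∀ t : ℕ, Q (j0 + (t : Fin N)) := by
    intro t
    induction t with
    | zero => simpa using h0
    | succ t ih =>
      have e : ((t+1 : ℕ) : Fin N) = ((t : ℕ) : Fin N) + 1 := by push_cast; ring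
      rw [e, ← add_assoc]; exact step _ ih
  intro i
  have := ht (i - j0).val
  rwa [Fin.cast_val_eq_self, add_comm, sub_add_cancel] at this

/-- Suppose the left-to-right greedy orthogonal scheme selects the messages
`σ 0 → δ 0, …, σ (n-1) → δ (n-1)`: it starts with the leftmost source and
destination, each chosen message is lexicographically minimal among the
remaining messages orthogonal to the previously chosen one, and after the last
one no orthogonal message remains.  Then the message set partitions into `n`
blocks (each message lies in exactly one block), where the `k`-th block
consists of the messages originating from sources in `[σ k, σ (k+1))` or
intended for destinations in `[δ k, δ (k+1))`, and each block induces an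
acyclic demand graph. -/
theorem stmt8 {Src Dst : Type*} (posS : Src → ℝ) (posD : Dst → ℝ)
    (desired heard : Src → Dst → Prop)
    (h : IsConvexCellular posS posD desired heard)
    (n : ℕ) (hn : 0 < n) (σ : Fin n → Src) (δ : Fin n → Dst)
    (hmonoS : StrictMono fun k => posS (σ k))
    (hmonoD : StrictMono fun k => posD (δ k))
    (hdes : ∀ k, desired (σ k) (δ k))
    (hleftS : ∀ s, posS (σ ⟨0, hn⟩) ≤ posS s)
    (hleftD : ∀ d, posD (δ ⟨0, hn⟩) ≤ posD d)
    (horth : ∀ (k : Fin n) (hk : (k : ℕ) + 1 < n),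
      ¬ heard (σ ⟨(k : ℕ) + 1, hk⟩) (δ k) ∧ ¬ heard (σ k) (δ ⟨(k : ℕ) + 1, hk⟩))
    (hmin : ∀ (k : Fin n) (hk : (k : ℕ) + 1 < n) (S : Src) (D : Dst),
      desired S D → posS (σ k) ≤ posS S → posD (δ k) ≤ posD D →
      ¬ heard S (δ k) → ¬ heard (σ k) D →
      posS (σ ⟨(k : ℕ) + 1, hk⟩) < posS S ∨
        (posS (σ ⟨(k : ℕ) + 1, hk⟩) = posS S ∧ posD (δ ⟨(k : ℕ) + 1, hk⟩) ≤ posD D))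
    (hterm : ∀ (S : Src) (D : Dst),
      desired S D → posS (σ ⟨n - 1, by omega⟩) ≤ posS S →
      posD (δ ⟨n - 1, by omega⟩) ≤ posD D →
      ¬ heard S (δ ⟨n - 1, by omega⟩) → ¬ heard (σ ⟨n - 1, by omega⟩) D → False) :
    (∀ S D, desired S D → ∃! k : Fin n, InBlock posS posD desired n σ δ k S D) ∧
    (∀ k : Fin n, ¬ HasAltCycleIn (InBlock posS posD desired n σ δ k) heard) := by
  classical
  constructor
  · -- Part 1 : partition
    intro S D hSD
    -- uniqueness helper
    have huniq : ∀ k1 k2 : Fin n, k1 < k2 →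
        InBlock posS posD desired n σ δ k1 S D →
        InBlock posS posD desired n σ δ k2 S D → False := by
      intro k1 k2 hlt hb1 hb2
      rcases hb1.2.2.2 with hlast | ⟨hk, hbd⟩
      · have := k2.isLt
        have := Fin.lt_def.mp hlt
        omega
      · have hle : (⟨(k1 : ℕ) + 1, hk⟩ : Fin n) ≤ k2 := by
          rw [Fin.le_def]
          exact Fin.lt_def.mp hlt
        have h1 : posS (σ ⟨(k1 : ℕ) + 1, hk⟩) ≤ posS (σ k2) := hmonoS.monotone hle
        have h2 : posD (δ ⟨(k1 : ℕ) + 1, hk⟩) ≤ posD (δ k2) := hmonoD.monotone hle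
        rcases hbd with hbd | hbd
        · exact absurd hb2.2.1 (by linarith)
        · exact absurd hb2.2.2.1 (by linarith)
    -- existence via maximal index
    have hT0 : (⟨0, hn⟩ : Fin n) ∈ Finset.univ.filter
        (fun k : Fin n => posS (σ k) ≤ posS S ∧ posD (δ k) ≤ posD D) := by
      simp [hleftS S, hleftD D]
    set T := Finset.univ.filter
        (fun k : Fin n => posS (σ k) ≤ posS S ∧ posD (δ k) ≤ posD D) with hT
    have hTne : T.Nonempty := ⟨_, hT0⟩
    set k := T.max' hTne with hkdef
    have hkmem := Finset.mem_filter.mp (T.max'_mem hTne)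
    have hblk : InBlock posS posD desired n σ δ k S D := by
      refine ⟨hSD, hkmem.2.1, hkmem.2.2, ?_⟩
      by_cases hkn : (k : ℕ) + 1 = n
      · exact Or.inl hkn
      · have hk : (k : ℕ) + 1 < n := by have := k.isLt; omega
        refine Or.inr ⟨hk, ?_⟩
        by_contra hcon
        push_neg at hcon
        have hmem : (⟨(k : ℕ) + 1, hk⟩ : Fin n) ∈ T := by
          rw [hT, Finset.mem_filter]
          exact ⟨Finset.mem_univ _, hcon.1, hcon.2⟩
        have := T.le_max' _ hmem
        rw [← hkdef, Fin.le_def] at this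
        simp at this
      -- omega?
    refine ⟨k, hblk, ?_⟩
    intro k' hk'
    rcases lt_trichotomy k' k with hlt | heq | hgt
    · exact absurd (huniq k' k hlt hk' hblk) (by simp)
    · exact heq
    · exact absurd (huniq k k' hgt hblk hk') (by simp)
  · -- Part 2 : acyclicity
    intro k hcycEx
    obtain ⟨m, s, d, hs_inj, hd_inj, hcyc⟩ := hcycEx
    have des : ∀ i, desired (s i) (d (i + 1)) := fun i => (hcyc i).2.1
    have nh : ∀ i, ¬ heard (s i) (d i) := fun i => (hcyc i).1
    have slow : ∀ i, posS (σ k) ≤ posS (s i) := fun i => (hcyc i).2.2.1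
    have dlow : ∀ i, posD (δ k) ≤ posD (d i) := by
      intro i
      have := (hcyc (i - 1)).2.2.2.1
      rwa [sub_add_cancel] at this
    -- Q i : destination left of source
    set Q : Fin (m + 1) → Prop := fun i => posD (d i) < posS (s i) with hQ
    have tri : ∀ i, Q i ∨ posS (s i) < posD (d i) := by
      intro i
      rcases lt_or_gt_of_ne (h.pos_ne (s i) (d i)) with h1 | h1
      · exact Or.inr h1
      · exact Or.inl h1
    -- existence of a flip j : Q j ∧ ¬ Q (j+1)
    have flip : ∃ j, Q j ∧ posS (s (j + 1)) < posD (d (j + 1)) := by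
      by_contra hnf
      push_neg at hnf
      have step : ∀ j, Q j → Q (j + 1) := by
        intro j hj
        rcases tri (j + 1) with h1 | h1
        · exact h1
        · exact absurd h1 (not_lt.mpr (hnf j hj))
      by_cases hex : ∃ j0, Q j0
      · -- all Q : sources strictly increase around the cycle
        obtain ⟨j0, hj0⟩ := hex
        have hall : ∀ i, Q i := cyclic_all Q step j0 hj0
        refine cyclic_no_strict_desc (fun i => -posS (s i)) ?_
        intro i
        have hQ1 : posD (d (i + 1)) < posS (s (i + 1)) := hall (i + 1)
        have hd1 : desired (s i) (d (i + 1)) := des i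
        have hnh1 : ¬ heard (s (i + 1)) (d (i + 1)) := nh (i + 1)
        rcases lt_trichotomy (posS (s i)) (posS (s (i + 1))) with h1 | h1 | h1
        · simpa using h1
        · exfalso
          have : s i = s (i + 1) := h.posS_inj h1
          rw [this] at hd1
          exact hnh1 (h.desired_heard _ _ hd1)
        · exfalso
          exact h.destHearR (s i) (s (i + 1)) (d (i + 1)) h1 hQ1 hnh1
            (h.desired_heard _ _ hd1)
      · -- no Q : destinations strictly decrease around the cycle
        push_neg at hex
        refine cyclic_no_strict_desc (fun i => posD (d i)) ?_
        intro i
        have hP : posS (s i) < posD (d i) := by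
          rcases tri i with h1 | h1
          · exact absurd h1 (hex i)
          · exact h1
        have hd1 : desired (s i) (d (i + 1)) := des i
        rcases lt_trichotomy (posD (d (i + 1))) (posD (d i)) with h1 | h1 | h1
        · exact h1
        · exfalso
          have : d (i + 1) = d i := h.posD_inj h1
          rw [this] at hd1
          exact nh i (h.desired_heard _ _ hd1)
        · exfalso
          exact h.srcHearR (d (i + 1)) (d i) (s i) h1 hP (nh i)
            (h.desired_heard _ _ hd1)
    obtain ⟨j, hQj, hPj1⟩ := flip
    -- ¬ heard (s j) (δ k)
    have nh1 : ¬ heard (s j) (δ k) := by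
      rcases eq_or_lt_of_le (dlow j) with h1 | h1
      · have : δ k = d j := h.posD_inj h1
        rw [this]; exact nh j
      · exact h.srcHearL (δ k) (d j) (s j) h1 hQj (nh j)
    -- ¬ heard (σ k) (d (j+1))
    have nh2 : ¬ heard (σ k) (d (j + 1)) := by
      rcases eq_or_lt_of_le (slow (j + 1)) with h1 | h1
      · have : σ k = s (j + 1) := h.posS_inj h1
        rw [this]; exact nh (j + 1)
      · exact h.destHearL (σ k) (s (j + 1)) (d (j + 1)) h1 hPj1 (nh (j + 1))
    have hdj1 : posD (δ k) ≤ posD (d (j + 1)) := (hcyc j).2.2.2.1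
    rcases (hcyc j).2.2.2.2 with hlast | ⟨hk, hbd⟩
    · -- last block: contradict hterm
      have hke : (⟨n - 1, by omega⟩ : Fin n) = k := Fin.ext (by simp; omega)
      exact hterm (s j) (d (j + 1)) (des j)
        (by rw [hke]; exact slow j) (by rw [hke]; exact hdj1)
        (by rw [hke]; exact nh1) (by rw [hke]; exact nh2)
    · -- non-last block
      have hm := hmin k hk (s j) (d (j + 1)) (des j) (slow j) hdj1 nh1 nh2
      have hS1 : posS (σ ⟨(k : ℕ) + 1, hk⟩) < posS (s j) := by
        rcases hm with h1 | ⟨h1, h2⟩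
        · exact h1
        · exfalso; rcases hbd with h3 | h3 <;> linarith
      have hD1 : posD (d (j + 1)) < posD (δ ⟨(k : ℕ) + 1, hk⟩) := by
        rcases hbd with h3 | h3
        · exact absurd h3 (by linarith)
        · exact h3
      -- desired (σ (k+1)) (d (j+1))
      have hdes' : desired (σ ⟨(k : ℕ) + 1, hk⟩) (d (j + 1)) := by
        rcases lt_trichotomy (posS (σ ⟨(k : ℕ) + 1, hk⟩)) (posD (d (j + 1))) with h1 | h1 | h1
        · exact h.srcConvR (δ ⟨(k : ℕ) + 1, hk⟩) (d (j + 1)) (σ ⟨(k : ℕ) + 1, hk⟩)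
            hD1 h1 (hdes _)
        · exact absurd h1 (h.pos_ne _ _)
        · exact h.destConvR (s j) (σ ⟨(k : ℕ) + 1, hk⟩) (d (j + 1)) hS1 h1 (des j)
      -- apply minimality to it : contradiction
      have hkk : k < (⟨(k : ℕ) + 1, hk⟩ : Fin n) := by
        rw [Fin.lt_def]; simp
      have := hmin k hk (σ ⟨(k : ℕ) + 1, hk⟩) (d (j + 1)) hdes'
        (le_of_lt (hmonoS hkk)) hdj1 (horth k hk).1 nh2
      rcases this with h1 | ⟨h1, h2⟩
      · exact lt_irrefl _ h1
      · linarith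
end

section
/- In a one-dimensional convex cellular network, the set of messages chosen by the left-to-right greedy orthogonal scheme is pairwise orthogonal: for any two chosen messages S_a → D_a and S_b → D_b with S_a < S_b, destination D_a cannot hear S_b and destination D_b cannot hear S_a. -/
/-- The messages `σ 0 → δ 0, …, σ (n-1) → δ (n-1)` chosen by the left-to-right
greedy orthogonal scheme (positions strictly increasing along the selection,
each message desired, and consecutive messages orthogonal) are pairwise
orthogonal: for any two chosen messages with `σ a` to the left of `σ b`,
destination `δ a` cannot hear `σ b` and destination `δ b` cannot hear `σ a`. -/
theorem stmt10 {Src Dst : Type*} (posS : Src → ℝ) (posD : Dst → ℝ)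
    (desired heard : Src → Dst → Prop)
    (h : IsConvexCellular posS posD desired heard)
    (n : ℕ) (σ : Fin n → Src) (δ : Fin n → Dst)
    (hmonoS : StrictMono fun k => posS (σ k))
    (hmonoD : StrictMono fun k => posD (δ k))
    (hdes : ∀ k, desired (σ k) (δ k))
    (horth : ∀ (k : Fin n) (hk : (k : ℕ) + 1 < n),
      ¬ heard (σ ⟨(k : ℕ) + 1, hk⟩) (δ k) ∧ ¬ heard (σ k) (δ ⟨(k : ℕ) + 1, hk⟩))
    (a b : Fin n) (hab : posS (σ a) < posS (σ b)) :
    ¬ heard (σ b) (δ a) ∧ ¬ heard (σ a) (δ b) := by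
  have hablt : a < b := by
    by_contra hc
    exact absurd hab (not_lt.mpr (hmonoS.le_iff_le.mpr (not_lt.mp hc)))
  have hk : (a : ℕ) + 1 < n := lt_of_le_of_lt (Nat.succ_le_of_lt hablt) b.isLt
  set a1 : Fin n := ⟨(a : ℕ) + 1, hk⟩ with ha1
  have haa1 : a < a1 := by simp [ha1, Fin.lt_def]
  have ha1b : a1 ≤ b := by
    have : (a : ℕ) + 1 ≤ (b : ℕ) := Nat.succ_le_of_lt hablt
    simpa [Fin.le_def, ha1] using this
  obtain ⟨horth1, horth2⟩ := horth a hk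
  have hheard : heard (σ a) (δ a) := h.desired_heard _ _ (hdes a)
  -- position of δ a is left of σ a1
  have hDa : posD (δ a) < posS (σ a1) := by
    rcases lt_trichotomy (posD (δ a)) (posS (σ a1)) with hlt | heq | hgt
    · exact hlt
    · exact absurd heq.symm (h.pos_ne _ _)
    · exact absurd hheard (h.destHearL (σ a) (σ a1) (δ a) (hmonoS haa1) hgt horth1)
  -- position of σ a is left of δ a1
  have hSa : posS (σ a) < posD (δ a1) := by
    rcases lt_trichotomy (posS (σ a)) (posD (δ a1)) with hlt | heq | hgt
    · exact hlt
    · exact absurd heq (h.pos_ne _ _)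
    · exact absurd hheard (h.srcHearL (δ a) (δ a1) (σ a) (hmonoD haa1) hgt horth2)
  rcases eq_or_lt_of_le ha1b with hb | hb
  · subst hb; exact ⟨horth1, horth2⟩
  · constructor
    · exact h.destHearR (σ b) (σ a1) (δ a) (hmonoS hb) hDa horth1
    · exact h.srcHearR (δ b) (δ a1) (σ a) (hmonoD hb) hSa horth2
end
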